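/- Let P = [m]×[n] be the product of two chains with m,n ≥ 2. For each integer k with 1-n ≤ k ≤ m-1, the statistic g_k = -2·Σ_{(i,j)∈P, i-j=k} 1_{(i,j)} + Σ_{(i,j)∈P, |i-j-k|=1} 1_{(i,j)} on order ideals of P equals the statistic Σ_{(i,j)∈P, i-j=k} T_{(i,j)} when k ≠ 0, and equals -1 + Σ_{(i,i)∈P} T_{(i,i)} when k = 0. -/

import Mathlib

open scoped Classical

/-- The order-ideal indicator function. -/
noncomputable def ind {α : Type*} (I : Set α) (p : α) : ℝ := if p ∈ I then 1 else 0

/-- The toggleability statistic: `1` if `p ∈ Min(P \ I)`, `-1` if `p ∈ Max I`, `0` otherwise. -/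
noncomputable def tog {α : Type*} [PartialOrder α] (I : Set α) (p : α) : ℝ :=
  if p ∉ I ∧ ∀ y, y ∉ I → y ≤ p → y = p then 1
  else if p ∈ I ∧ ∀ y ∈ I, p ≤ y → p = y then -1
  else 0

noncomputable def Xf (m n : ℕ) (I : Set (Fin m × Fin n)) (i j : ℤ) : ℝ :=
  if i < 0 ∨ j < 0 then 1
  else if h : 0 ≤ i ∧ 0 ≤ j ∧ i < (m : ℤ) ∧ j < (n : ℤ) then
    (if ((⟨i.toNat, by omega⟩ : Fin m), (⟨j.toNat, by omega⟩ : Fin n)) ∈ I then 1 else 0)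
  else 0

variable {m n : ℕ} {I : Set (Fin m × Fin n)}

lemma Xf_coe (p : Fin m × Fin n) : Xf m n I (p.1 : ℤ) (p.2 : ℤ) = ind I p := by
  rw [Xf, if_neg (by push_neg; constructor <;> positivity)]
  rw [dif_pos (by refine ⟨by positivity, by positivity, ?_, ?_⟩ <;> exact_mod_cast (Fin.is_lt _))]
  have : ((⟨((p.1 : ℤ)).toNat, by omega⟩ : Fin m), (⟨((p.2 : ℤ)).toNat, by omega⟩ : Fin n)) = p := by
    ext <;> simp
  rw [this, ind]

lemma Xf_of_neg {i j : ℤ} (h : i < 0 ∨ j < 0) : Xf m n I i j = 1 := by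
  rw [Xf, if_pos h]

lemma Xf_of_big {i j : ℤ} (hi : 0 ≤ i) (hj : 0 ≤ j) (h : (m : ℤ) ≤ i ∨ (n : ℤ) ≤ j) :
    Xf m n I i j = 0 := by
  rw [Xf, if_neg (by omega), dif_neg (by omega)]

lemma Xf_mem (i j : ℤ) : Xf m n I i j = 0 ∨ Xf m n I i j = 1 := by
  rw [Xf]; split_ifs <;> simp

lemma Xf_one_mem {i j : ℤ} (hi : 0 ≤ i) (hj : 0 ≤ j) (h : Xf m n I i j = 1) :
    ∃ p : Fin m × Fin n, (p.1 : ℤ) = i ∧ (p.2 : ℤ) = j ∧ p ∈ I := by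
  rw [Xf, if_neg (by omega)] at h
  by_cases hr : 0 ≤ i ∧ 0 ≤ j ∧ i < (m : ℤ) ∧ j < (n : ℤ)
  · rw [dif_pos hr] at h
    refine ⟨((⟨i.toNat, by omega⟩ : Fin m), (⟨j.toNat, by omega⟩ : Fin n)), by simp [hi], by simp [hj], ?_⟩
    by_contra hc
    rw [if_neg hc] at h; norm_num at h
  · rw [dif_neg hr] at h; norm_num at h

lemma Xf_one_of_le (hI : IsLowerSet I) {i j i' j' : ℤ} (hii : i ≤ i') (hjj : j ≤ j')
    (h : Xf m n I i' j' = 1) : Xf m n I i j = 1 := by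
  by_cases hneg : i < 0 ∨ j < 0
  · exact Xf_of_neg hneg
  push_neg at hneg
  obtain ⟨p, hp1, hp2, hpI⟩ := Xf_one_mem (by omega) (by omega) h
  have hq : ((⟨i.toNat, by omega⟩ : Fin m), (⟨j.toNat, by omega⟩ : Fin n)) ∈ I := by
    refine hI ⟨?_, ?_⟩ hpI
    · show (⟨i.toNat, by omega⟩ : Fin m) ≤ p.1
      simp [Fin.le_def] <;> omega
    · show (⟨j.toNat, by omega⟩ : Fin n) ≤ p.2
      simp [Fin.le_def] <;> omega
  rw [Xf, if_neg (by omega), dif_pos ⟨by omega, by omega, by omega, by omega⟩, if_pos hq]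

lemma Xf_anti (hI : IsLowerSet I) {i j i' j' : ℤ} (hii : i ≤ i') (hjj : j ≤ j') :
    Xf m n I i' j' ≤ Xf m n I i j := by
  rcases Xf_mem (m := m) (n := n) (I := I) i' j' with h | h
  · rw [h]; rcases Xf_mem (m := m) (n := n) (I := I) i j with h2 | h2 <;> rw [h2] <;> norm_num
  · rw [h, Xf_one_of_le hI hii hjj h]

lemma Xf_eq_ind (i j : ℤ) (p : Fin m × Fin n) (h1 : ((p.1 : ℕ) : ℤ) = i)
    (h2 : ((p.2 : ℕ) : ℤ) = j) : Xf m n I i j = ind I p := by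
  subst h1; subst h2; exact Xf_coe p

lemma tog_eq (hI : IsLowerSet I) (p : Fin m × Fin n) :
    tog I p =
      (1 - Xf m n I (p.1 : ℤ) (p.2 : ℤ)) * Xf m n I ((p.1 : ℤ) - 1) (p.2 : ℤ)
          * Xf m n I (p.1 : ℤ) ((p.2 : ℤ) - 1)
        - Xf m n I (p.1 : ℤ) (p.2 : ℤ) * (1 - Xf m n I (p.1 : ℤ) ((p.2 : ℤ) + 1))
          * (1 - Xf m n I ((p.1 : ℤ) + 1) (p.2 : ℤ)) := by
  have ha : Xf m n I (p.1 : ℤ) (p.2 : ℤ) = ind I p := Xf_coe p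
  rw [tog]
  split_ifs with h1 h2
  · -- toggleable in: value 1
    have ha0 : Xf m n I (p.1 : ℤ) (p.2 : ℤ) = 0 := by rw [ha, ind, if_neg h1.1]
    have hu : Xf m n I ((p.1 : ℤ) - 1) (p.2 : ℤ) = 1 := by
      rcases Nat.eq_zero_or_pos p.1.val with h0 | h0
      · exact Xf_of_neg (by omega)
      · have hq : ((⟨p.1.val - 1, by omega⟩ : Fin m), p.2) ∈ I := by
          by_contra hc
          have := h1.2 _ hc ⟨by simp [Fin.le_def] <;> omega, le_refl _⟩
          have := congrArg (fun q : Fin m × Fin n => q.1.val) this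
          simp at this; omega
        rw [Xf_eq_ind _ _ ((⟨p.1.val - 1, by omega⟩ : Fin m), p.2) (by simp; omega) rfl,
          ind, if_pos hq]
    have hv : Xf m n I (p.1 : ℤ) ((p.2 : ℤ) - 1) = 1 := by
      rcases Nat.eq_zero_or_pos p.2.val with h0 | h0
      · exact Xf_of_neg (by omega)
      · have hq : ((p.1, (⟨p.2.val - 1, by omega⟩ : Fin n)) : Fin m × Fin n) ∈ I := by
          by_contra hc
          have := h1.2 _ hc ⟨le_refl _, by simp [Fin.le_def] <;> omega⟩
          have := congrArg (fun q : Fin m × Fin n => q.2.val) this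
          simp at this; omega
        rw [Xf_eq_ind _ _ (p.1, (⟨p.2.val - 1, by omega⟩ : Fin n)) rfl (by simp; omega),
          ind, if_pos hq]
    rw [ha0, hu, hv]; ring
  · -- toggleable out: value -1
    have ha1 : Xf m n I (p.1 : ℤ) (p.2 : ℤ) = 1 := by rw [ha, ind, if_pos h2.1]
    have hu' : Xf m n I (p.1 : ℤ) ((p.2 : ℤ) + 1) = 0 := by
      by_cases hr : p.2.val + 1 < n
      · have hq : ((p.1, (⟨p.2.val + 1, hr⟩ : Fin n)) : Fin m × Fin n) ∉ I := by
          intro hc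
          have := h2.2 _ hc ⟨le_refl _, by simp [Fin.le_def] <;> omega⟩
          have := congrArg (fun q : Fin m × Fin n => q.2.val) this
          simp at this
        rw [Xf_eq_ind _ _ (p.1, (⟨p.2.val + 1, hr⟩ : Fin n)) rfl (by simp), ind, if_neg hq]
      · exact Xf_of_big (by positivity) (by positivity) (by right; omega)
    have hv' : Xf m n I ((p.1 : ℤ) + 1) (p.2 : ℤ) = 0 := by
      by_cases hr : p.1.val + 1 < m
      · have hq : (((⟨p.1.val + 1, hr⟩ : Fin m), p.2) : Fin m × Fin n) ∉ I := by
          intro hc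
          have := h2.2 _ hc ⟨by simp [Fin.le_def] <;> omega, le_refl _⟩
          have := congrArg (fun q : Fin m × Fin n => q.1.val) this
          simp at this
        rw [Xf_eq_ind _ _ ((⟨p.1.val + 1, hr⟩ : Fin m), p.2) (by simp) rfl, ind, if_neg hq]
      · exact Xf_of_big (by positivity) (by positivity) (by left; omega)
    rw [ha1, hu', hv']; ring
  · -- neither: value 0
    by_cases hp : p ∈ I
    · have ha1 : Xf m n I (p.1 : ℤ) (p.2 : ℤ) = 1 := by rw [ha, ind, if_pos hp]
      push_neg at h2
      obtain ⟨y, hyI, hpy, hne⟩ := h2 hp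
      have hlt : p.1.val < y.1.val ∨ p.2.val < y.2.val := by
        by_contra hc
        push_neg at hc
        exact hne (Prod.ext (Fin.le_antisymm hpy.1 (by rw [Fin.le_def]; omega))
          (Fin.le_antisymm hpy.2 (by rw [Fin.le_def]; omega)))
      have hy1 : Xf m n I (y.1 : ℤ) (y.2 : ℤ) = 1 := by rw [Xf_coe, ind, if_pos hyI]
      rcases hlt with hlt | hlt
      · have : Xf m n I ((p.1 : ℤ) + 1) (p.2 : ℤ) = 1 := by
          refine Xf_one_of_le hI ?_ ?_ hy1
          · have := hpy.1; omega
          · have := hpy.2; rw [Fin.le_def] at this; omega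
        rw [ha1, this]; ring
      · have : Xf m n I (p.1 : ℤ) ((p.2 : ℤ) + 1) = 1 := by
          refine Xf_one_of_le hI ?_ ?_ hy1
          · have := hpy.1; rw [Fin.le_def] at this; omega
          · have := hpy.2; omega
        rw [ha1, this]; ring
    · have ha0 : Xf m n I (p.1 : ℤ) (p.2 : ℤ) = 0 := by rw [ha, ind, if_neg hp]
      push_neg at h1
      obtain ⟨y, hyI, hyp, hne⟩ := h1 hp
      have hlt : y.1.val < p.1.val ∨ y.2.val < p.2.val := by
        by_contra hc
        push_neg at hc
        exact hne (Prod.ext (Fin.le_antisymm hyp.1 (by rw [Fin.le_def]; omega))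
          (Fin.le_antisymm hyp.2 (by rw [Fin.le_def]; omega)))
      have hy0 : Xf m n I (y.1 : ℤ) (y.2 : ℤ) = 0 := by rw [Xf_coe, ind, if_neg hyI]
      rcases hlt with hlt | hlt
      · have : Xf m n I ((p.1 : ℤ) - 1) (p.2 : ℤ) = 0 := by
          rcases Xf_mem (m := m) (n := n) (I := I) ((p.1 : ℤ) - 1) (p.2 : ℤ) with h | h
          · exact h
          · exfalso
            have := Xf_one_of_le hI (i := (y.1 : ℤ)) (j := (y.2 : ℤ)) (by omega)
              (by have := hyp.2; rw [Fin.le_def] at this; omega) h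
            rw [hy0] at this; norm_num at this
        rw [ha0, this]; ring
      · have : Xf m n I (p.1 : ℤ) ((p.2 : ℤ) - 1) = 0 := by
          rcases Xf_mem (m := m) (n := n) (I := I) (p.1 : ℤ) ((p.2 : ℤ) - 1) with h | h
          · exact h
          · exfalso
            have := Xf_one_of_le hI (i := (y.1 : ℤ)) (j := (y.2 : ℤ))
              (by have := hyp.1; rw [Fin.le_def] at this; omega) (by omega) h
            rw [hy0] at this; norm_num at this
        rw [ha0, this]; ring

def fpt (m n : ℕ) (hm : 0 < m) (hn : 0 < n) (i j : ℤ) : Fin m × Fin n :=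
  (⟨i.toNat % m, Nat.mod_lt _ hm⟩, ⟨j.toNat % n, Nat.mod_lt _ hn⟩)

lemma fpt_fst {hm : 0 < m} {hn : 0 < n} {i j : ℤ} (h1 : 0 ≤ i) (h2 : i < m) :
    (((fpt m n hm hn i j).1 : ℕ) : ℤ) = i := by
  simp only [fpt]
  rw [Nat.mod_eq_of_lt (by omega)]
  omega

lemma fpt_snd {hm : 0 < m} {hn : 0 < n} {i j : ℤ} (h1 : 0 ≤ j) (h2 : j < n) :
    (((fpt m n hm hn i j).2 : ℕ) : ℤ) = j := by
  simp only [fpt]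
  rw [Nat.mod_eq_of_lt (by omega)]
  omega

lemma alg1 (a u v u' v' : ℝ) (hu : u = 0 ∨ u = 1) (hv : v = 0 ∨ v = 1)
    (hu' : u' = 0 ∨ u' = 1) (hv' : v' = 0 ∨ v' = 1) (haa : a = 0 ∨ a = 1)
    (h1 : a ≤ u) (h2 : a ≤ v) (h3 : u' ≤ a) (h4 : v' ≤ a) :
    (1 - a) * u * v - a * (1 - u') * (1 - v')
      = (u * v - u' * v') + (u' + v') - 2 * a := by
  rcases haa with rfl | rfl <;> rcases hu with rfl | rfl <;> rcases hv with rfl | rfl <;>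
    rcases hu' with rfl | rfl <;> rcases hv' with rfl | rfl <;> first | linarith | ring

lemma alg2 (u0 v0 uD vD : ℝ) (h0 : u0 = 1 ∨ v0 = 1) (hD : uD = 0 ∨ vD = 0)
    (m1 : u0 = 0 ∨ u0 = 1) (m2 : v0 = 0 ∨ v0 = 1) (m3 : uD = 0 ∨ uD = 1)
    (m4 : vD = 0 ∨ vD = 1) : u0 + v0 - 1 = u0 * v0 - uD * vD := by
  rcases m1 with rfl | rfl <;> rcases m2 with rfl | rfl <;> rcases m3 with rfl | rfl <;>
    rcases m4 with rfl | rfl <;> rcases h0 with h | h <;> rcases hD with h' | h' <;>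
    simp_all

/-- In `P = [m] × [n]`, for each diagonal class `i - j = k` with `1-n ≤ k ≤ m-1`,
the statistic `g_k = -2·Σ_{i-j=k} 1_{(i,j)} + Σ_{|i-j-k|=1} 1_{(i,j)}` equals
`Σ_{i-j=k} T_{(i,j)}` when `k ≠ 0` and `-1 + Σ_{i=j} T_{(i,i)}` when `k = 0`. -/
theorem stmt_8 (m n : ℕ) (hm : 2 ≤ m) (hn : 2 ≤ n) (k : ℤ)
    (hk1 : 1 - (n : ℤ) ≤ k) (hk2 : k ≤ (m : ℤ) - 1)
    (I : Set (Fin m × Fin n)) (hI : IsLowerSet I) :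
    -2 * (∑ p ∈ Finset.univ.filter (fun p : Fin m × Fin n => (p.1 : ℤ) - (p.2 : ℤ) = k),
        ind I p)
      + (∑ p ∈ Finset.univ.filter
          (fun p : Fin m × Fin n => |(p.1 : ℤ) - (p.2 : ℤ) - k| = 1), ind I p)
      = (if k = 0 then -1 else 0)
        + ∑ p ∈ Finset.univ.filter (fun p : Fin m × Fin n => (p.1 : ℤ) - (p.2 : ℤ) = k),
            tog I p := by
  classical
  have hm' : (2 : ℤ) ≤ (m : ℤ) := by exact_mod_cast hm
  have hn' : (2 : ℤ) ≤ (n : ℤ) := by exact_mod_cast hn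
  have hm0 : 0 < m := by omega
  have hn0 : 0 < n := by omega
  obtain ⟨A, hA⟩ : ∃ A : ℤ, A = max 0 k := ⟨_, rfl⟩
  obtain ⟨D, hD⟩ : ∃ D : ℕ, (D : ℤ) = min (m : ℤ) ((n : ℤ) + k) - A :=
    ⟨(min (m : ℤ) ((n : ℤ) + k) - A).toNat, by omega⟩
  have hD1 : 1 ≤ D := by omega
  set u : ℕ → ℝ := fun s => Xf m n I (A + s - 1) (A + s - k) with hu
  set v : ℕ → ℝ := fun s => Xf m n I (A + s) (A + s - k - 1) with hv
  set a : ℕ → ℝ := fun s => Xf m n I (A + s) (A + s - k) with ha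
  -- diagonal k
  have hS1 : (∑ p ∈ Finset.univ.filter
      (fun p : Fin m × Fin n => (p.1 : ℤ) - (p.2 : ℤ) = k), ind I p)
      = ∑ s ∈ Finset.range D, a s := by
    refine Finset.sum_bij' (fun p _ => ((p.1 : ℤ) - A).toNat)
      (fun s _ => fpt m n hm0 hn0 (A + s) (A + s - k)) ?_ ?_ ?_ ?_ ?_
    · intro p hp
      simp only [Finset.mem_filter, Finset.mem_univ, true_and] at hp
      have h1 := p.1.isLt; have h2 := p.2.isLt
      simp only [Finset.mem_range]
      omega
    · intro s hs
      simp only [Finset.mem_range] at hs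
      simp only [Finset.mem_filter, Finset.mem_univ, true_and]
      rw [fpt_fst (by omega) (by omega), fpt_snd (by omega) (by omega)]
      ring
    · intro p hp
      simp only [Finset.mem_filter, Finset.mem_univ, true_and] at hp
      have h1 := p.1.isLt; have h2 := p.2.isLt
      show fpt m n hm0 hn0 (A + ((((p.1 : ℤ) - A).toNat : ℕ) : ℤ))
          (A + ((((p.1 : ℤ) - A).toNat : ℕ) : ℤ) - k) = p
      have e1 : A + ((((p.1 : ℤ) - A).toNat : ℕ) : ℤ) = (p.1 : ℤ) := by omega
      rw [e1]
      have e2 : (p.1 : ℤ) - k = (p.2 : ℤ) := by omega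
      rw [e2]
      have f1 := fpt_fst (hm := hm0) (hn := hn0) (i := ((p.1 : ℕ) : ℤ)) (j := ((p.2 : ℕ) : ℤ))
        (by positivity) (by exact_mod_cast h1)
      have f2 := fpt_snd (hm := hm0) (hn := hn0) (i := ((p.1 : ℕ) : ℤ)) (j := ((p.2 : ℕ) : ℤ))
        (by positivity) (by exact_mod_cast h2)
      ext <;> omega
    · intro s hs
      simp only [Finset.mem_range] at hs
      show ((((fpt m n hm0 hn0 (A + (s : ℤ)) (A + (s : ℤ) - k)).1 : ℕ) : ℤ) - A).toNat = s
      have := fpt_fst (hm := hm0) (hn := hn0) (i := A + (s : ℤ)) (j := A + s - k)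
        (by omega) (by omega)
      omega
    · intro p hp
      simp only [Finset.mem_filter, Finset.mem_univ, true_and] at hp
      have h1 := p.1.isLt; have h2 := p.2.isLt
      show ind I p = a (((p.1 : ℤ) - A).toNat)
      rw [ha]
      exact (Xf_eq_ind _ _ p (by omega) (by omega)).symm
  -- diagonal k-1 : u
  have hU : ∑ s ∈ Finset.range (D + 1), u s
      = (∑ p ∈ Finset.univ.filter
          (fun p : Fin m × Fin n => (p.1 : ℤ) - (p.2 : ℤ) = k - 1), ind I p)
        + (if k ≤ 0 then (1 : ℝ) else 0) := by
    rw [← Finset.sum_filter_add_sum_filter_not (Finset.range (D + 1))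
      (fun s : ℕ => 1 ≤ A + s ∧ A + s - k ≤ (n : ℤ) - 1)]
    congr 1
    · symm
      refine Finset.sum_bij' (fun p _ => (((p.1 : ℤ) + 1 - A).toNat))
        (fun s _ => fpt m n hm0 hn0 (A + s - 1) (A + s - k)) ?_ ?_ ?_ ?_ ?_
      · intro p hp
        simp only [Finset.mem_filter, Finset.mem_univ, true_and] at hp
        have h1 := p.1.isLt; have h2 := p.2.isLt
        simp only [Finset.mem_filter, Finset.mem_range]
        omega
      · intro s hs
        simp only [Finset.mem_filter, Finset.mem_range] at hs
        simp only [Finset.mem_filter, Finset.mem_univ, true_and]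
        rw [fpt_fst (by omega) (by omega), fpt_snd (by omega) (by omega)]
        ring
      · intro p hp
        simp only [Finset.mem_filter, Finset.mem_univ, true_and] at hp
        have h1 := p.1.isLt; have h2 := p.2.isLt
        show fpt m n hm0 hn0 (A + ((((p.1 : ℤ) + 1 - A).toNat : ℕ) : ℤ) - 1)
            (A + ((((p.1 : ℤ) + 1 - A).toNat : ℕ) : ℤ) - k) = p
        have e1 : A + ((((p.1 : ℤ) + 1 - A).toNat : ℕ) : ℤ) = (p.1 : ℤ) + 1 := by omega
        rw [e1]
        have e2 : (p.1 : ℤ) + 1 - 1 = ((p.1 : ℕ) : ℤ) := by ring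
        rw [e2]
        have e3 : (p.1 : ℤ) + 1 - k = ((p.2 : ℕ) : ℤ) := by omega
        rw [e3]
        have f1 := fpt_fst (hm := hm0) (hn := hn0) (i := ((p.1 : ℕ) : ℤ)) (j := ((p.2 : ℕ) : ℤ))
          (by positivity) (by exact_mod_cast h1)
        have f2 := fpt_snd (hm := hm0) (hn := hn0) (i := ((p.1 : ℕ) : ℤ)) (j := ((p.2 : ℕ) : ℤ))
          (by positivity) (by exact_mod_cast h2)
        ext <;> omega
      · intro s hs
        simp only [Finset.mem_filter, Finset.mem_range] at hs
        show ((((fpt m n hm0 hn0 (A + (s : ℤ) - 1) (A + (s : ℤ) - k)).1 : ℕ) : ℤ)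
          + 1 - A).toNat = s
        have := fpt_fst (hm := hm0) (hn := hn0) (i := A + (s : ℤ) - 1) (j := A + s - k)
          (by omega) (by omega)
        omega
      · intro p hp
        simp only [Finset.mem_filter, Finset.mem_univ, true_and] at hp
        have h1 := p.1.isLt; have h2 := p.2.isLt
        show ind I p = u (((p.1 : ℤ) + 1 - A).toNat)
        rw [hu]
        exact (Xf_eq_ind _ _ p (by omega) (by omega)).symm
    · have hval : ∀ s ∈ (Finset.range (D + 1)).filter
          (fun s : ℕ => ¬(1 ≤ A + s ∧ A + s - k ≤ (n : ℤ) - 1)),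
          u s = if s = 0 then 1 else 0 := by
        intro s hs
        simp only [Finset.mem_filter, Finset.mem_range] at hs
        rcases eq_or_ne s 0 with rfl | hs0
        · rw [if_pos rfl, hu]
          exact Xf_of_neg (by omega)
        · rw [if_neg hs0, hu]
          exact Xf_of_big (by omega) (by omega) (by right; omega)
      rw [Finset.sum_congr rfl hval, Finset.sum_ite_eq' _ 0 (fun _ => (1 : ℝ))]
      have hiff : (0 ∈ (Finset.range (D + 1)).filter
          (fun s : ℕ => ¬(1 ≤ A + s ∧ A + s - k ≤ (n : ℤ) - 1))) ↔ k ≤ 0 := by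
        simp only [Finset.mem_filter, Finset.mem_range]
        omega
      rw [if_congr hiff rfl rfl]
  -- diagonal k+1 : v
  have hV : ∑ s ∈ Finset.range (D + 1), v s
      = (∑ p ∈ Finset.univ.filter
          (fun p : Fin m × Fin n => (p.1 : ℤ) - (p.2 : ℤ) = k + 1), ind I p)
        + (if 0 ≤ k then (1 : ℝ) else 0) := by
    rw [← Finset.sum_filter_add_sum_filter_not (Finset.range (D + 1))
      (fun s : ℕ => A + s ≤ (m : ℤ) - 1 ∧ 1 ≤ A + s - k)]
    congr 1
    · symm
      refine Finset.sum_bij' (fun p _ => (((p.1 : ℤ) - A).toNat))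
        (fun s _ => fpt m n hm0 hn0 (A + s) (A + s - k - 1)) ?_ ?_ ?_ ?_ ?_
      · intro p hp
        simp only [Finset.mem_filter, Finset.mem_univ, true_and] at hp
        have h1 := p.1.isLt; have h2 := p.2.isLt
        simp only [Finset.mem_filter, Finset.mem_range]
        omega
      · intro s hs
        simp only [Finset.mem_filter, Finset.mem_range] at hs
        simp only [Finset.mem_filter, Finset.mem_univ, true_and]
        rw [fpt_fst (by omega) (by omega), fpt_snd (by omega) (by omega)]
        ring
      · intro p hp
        simp only [Finset.mem_filter, Finset.mem_univ, true_and] at hp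
        have h1 := p.1.isLt; have h2 := p.2.isLt
        show fpt m n hm0 hn0 (A + ((((p.1 : ℤ) - A).toNat : ℕ) : ℤ))
            (A + ((((p.1 : ℤ) - A).toNat : ℕ) : ℤ) - k - 1) = p
        have e1 : A + ((((p.1 : ℤ) - A).toNat : ℕ) : ℤ) = ((p.1 : ℕ) : ℤ) := by omega
        rw [e1]
        have e3 : ((p.1 : ℕ) : ℤ) - k - 1 = ((p.2 : ℕ) : ℤ) := by omega
        rw [e3]
        have f1 := fpt_fst (hm := hm0) (hn := hn0) (i := ((p.1 : ℕ) : ℤ)) (j := ((p.2 : ℕ) : ℤ))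
          (by positivity) (by exact_mod_cast h1)
        have f2 := fpt_snd (hm := hm0) (hn := hn0) (i := ((p.1 : ℕ) : ℤ)) (j := ((p.2 : ℕ) : ℤ))
          (by positivity) (by exact_mod_cast h2)
        ext <;> omega
      · intro s hs
        simp only [Finset.mem_filter, Finset.mem_range] at hs
        show ((((fpt m n hm0 hn0 (A + (s : ℤ)) (A + (s : ℤ) - k - 1)).1 : ℕ) : ℤ)
          - A).toNat = s
        have := fpt_fst (hm := hm0) (hn := hn0) (i := A + (s : ℤ)) (j := A + s - k - 1)
          (by omega) (by omega)
        omega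
      · intro p hp
        simp only [Finset.mem_filter, Finset.mem_univ, true_and] at hp
        have h1 := p.1.isLt; have h2 := p.2.isLt
        show ind I p = v (((p.1 : ℤ) - A).toNat)
        rw [hv]
        exact (Xf_eq_ind _ _ p (by omega) (by omega)).symm
    · have hval : ∀ s ∈ (Finset.range (D + 1)).filter
          (fun s : ℕ => ¬(A + s ≤ (m : ℤ) - 1 ∧ 1 ≤ A + s - k)),
          v s = if s = 0 then 1 else 0 := by
        intro s hs
        simp only [Finset.mem_filter, Finset.mem_range] at hs
        rcases eq_or_ne s 0 with rfl | hs0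
        · rw [if_pos rfl, hv]
          exact Xf_of_neg (by omega)
        · rw [if_neg hs0, hv]
          exact Xf_of_big (by omega) (by omega) (by left; omega)
      rw [Finset.sum_congr rfl hval, Finset.sum_ite_eq' _ 0 (fun _ => (1 : ℝ))]
      have hiff : (0 ∈ (Finset.range (D + 1)).filter
          (fun s : ℕ => ¬(A + s ≤ (m : ℤ) - 1 ∧ 1 ≤ A + s - k))) ↔ 0 ≤ k := by
        simp only [Finset.mem_filter, Finset.mem_range]
        omega
      rw [if_congr hiff rfl rfl]
  -- split of the |diff - k| = 1 sum
  have hsplit : (∑ p ∈ Finset.univ.filter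
      (fun p : Fin m × Fin n => |(p.1 : ℤ) - (p.2 : ℤ) - k| = 1), ind I p)
      = (∑ p ∈ Finset.univ.filter
          (fun p : Fin m × Fin n => (p.1 : ℤ) - (p.2 : ℤ) = k - 1), ind I p)
        + (∑ p ∈ Finset.univ.filter
          (fun p : Fin m × Fin n => (p.1 : ℤ) - (p.2 : ℤ) = k + 1), ind I p) := by
    have hset : Finset.univ.filter
        (fun p : Fin m × Fin n => |(p.1 : ℤ) - (p.2 : ℤ) - k| = 1)
        = (Finset.univ.filter (fun p : Fin m × Fin n => (p.1 : ℤ) - (p.2 : ℤ) = k - 1))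
          ∪ (Finset.univ.filter (fun p : Fin m × Fin n => (p.1 : ℤ) - (p.2 : ℤ) = k + 1)) := by
      ext p
      simp only [Finset.mem_filter, Finset.mem_union, Finset.mem_univ, true_and,
        abs_eq (by norm_num : (0:ℤ) ≤ 1)]
      omega
    rw [hset, Finset.sum_union]
    rw [Finset.disjoint_left]
    intro p hp1 hp2
    simp only [Finset.mem_filter, Finset.mem_univ, true_and] at hp1 hp2
    omega
  -- the toggle sum
  have hS3 : (∑ p ∈ Finset.univ.filter
      (fun p : Fin m × Fin n => (p.1 : ℤ) - (p.2 : ℤ) = k), tog I p)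
      = ∑ s ∈ Finset.range D,
          ((1 - a s) * u s * v s - a s * (1 - u (s + 1)) * (1 - v (s + 1))) := by
    refine Finset.sum_bij' (fun p _ => ((p.1 : ℤ) - A).toNat)
      (fun s _ => fpt m n hm0 hn0 (A + s) (A + s - k)) ?_ ?_ ?_ ?_ ?_
    · intro p hp
      simp only [Finset.mem_filter, Finset.mem_univ, true_and] at hp
      have h1 := p.1.isLt; have h2 := p.2.isLt
      simp only [Finset.mem_range]
      omega
    · intro s hs
      simp only [Finset.mem_range] at hs
      simp only [Finset.mem_filter, Finset.mem_univ, true_and]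
      rw [fpt_fst (by omega) (by omega), fpt_snd (by omega) (by omega)]
      ring
    · intro p hp
      simp only [Finset.mem_filter, Finset.mem_univ, true_and] at hp
      have h1 := p.1.isLt; have h2 := p.2.isLt
      show fpt m n hm0 hn0 (A + ((((p.1 : ℤ) - A).toNat : ℕ) : ℤ))
          (A + ((((p.1 : ℤ) - A).toNat : ℕ) : ℤ) - k) = p
      have e1 : A + ((((p.1 : ℤ) - A).toNat : ℕ) : ℤ) = ((p.1 : ℕ) : ℤ) := by omega
      rw [e1]
      have e2 : ((p.1 : ℕ) : ℤ) - k = ((p.2 : ℕ) : ℤ) := by omega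
      rw [e2]
      have f1 := fpt_fst (hm := hm0) (hn := hn0) (i := ((p.1 : ℕ) : ℤ)) (j := ((p.2 : ℕ) : ℤ))
        (by positivity) (by exact_mod_cast h1)
      have f2 := fpt_snd (hm := hm0) (hn := hn0) (i := ((p.1 : ℕ) : ℤ)) (j := ((p.2 : ℕ) : ℤ))
        (by positivity) (by exact_mod_cast h2)
      ext <;> omega
    · intro s hs
      simp only [Finset.mem_range] at hs
      show ((((fpt m n hm0 hn0 (A + (s : ℤ)) (A + (s : ℤ) - k)).1 : ℕ) : ℤ) - A).toNat = s
      have := fpt_fst (hm := hm0) (hn := hn0) (i := A + (s : ℤ)) (j := A + s - k)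
        (by omega) (by omega)
      omega
    · intro p hp
      simp only [Finset.mem_filter, Finset.mem_univ, true_and] at hp
      have h1 := p.1.isLt; have h2 := p.2.isLt
      show tog I p
        = (1 - a (((p.1 : ℤ) - A).toNat)) * u (((p.1 : ℤ) - A).toNat)
            * v (((p.1 : ℤ) - A).toNat)
          - a (((p.1 : ℤ) - A).toNat) * (1 - u ((((p.1 : ℤ) - A).toNat) + 1))
            * (1 - v ((((p.1 : ℤ) - A).toNat) + 1))
      rw [ha, hu, hv]
      simp only
      push_cast
      have e1 : A + ((((p.1 : ℤ) - A).toNat : ℕ) : ℤ) = ((p.1 : ℕ) : ℤ) := by omega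
      have e2 : A + (((((p.1 : ℤ) - A).toNat : ℕ) : ℤ) + 1) = ((p.1 : ℕ) : ℤ) + 1 := by omega
      rw [e2, e1]
      have e3 : ((p.1 : ℕ) : ℤ) - k = ((p.2 : ℕ) : ℤ) := by omega
      rw [e3]
      have e4 : ((p.1 : ℕ) : ℤ) + 1 - 1 = ((p.1 : ℕ) : ℤ) := by ring
      rw [e4]
      have e5 : ((p.1 : ℕ) : ℤ) + 1 - k = ((p.2 : ℕ) : ℤ) + 1 := by omega
      rw [e5]
      have e6 : ((p.2 : ℕ) : ℤ) + 1 - 1 = ((p.2 : ℕ) : ℤ) := by ring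
      rw [e6]
      exact tog_eq hI p
  -- pointwise algebraic identity
  have hmemu : ∀ s : ℕ, u s = 0 ∨ u s = 1 := fun s => by rw [hu]; exact Xf_mem _ _
  have hmemv : ∀ s : ℕ, v s = 0 ∨ v s = 1 := fun s => by rw [hv]; exact Xf_mem _ _
  have hmema : ∀ s : ℕ, a s = 0 ∨ a s = 1 := fun s => by rw [ha]; exact Xf_mem _ _
  have hau : ∀ s : ℕ, a s ≤ u s := fun s => by
    rw [ha, hu]; exact Xf_anti hI (by omega) (by omega)
  have hav : ∀ s : ℕ, a s ≤ v s := fun s => by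
    rw [ha, hv]; exact Xf_anti hI (by omega) (by omega)
  have hua : ∀ s : ℕ, u (s + 1) ≤ a s := fun s => by
    rw [ha, hu]; exact Xf_anti hI (by push_cast; omega) (by push_cast; omega)
  have hva : ∀ s : ℕ, v (s + 1) ≤ a s := fun s => by
    rw [ha, hv]; exact Xf_anti hI (by push_cast; omega) (by push_cast; omega)
  have hterm : ∀ s ∈ Finset.range D,
      (1 - a s) * u s * v s - a s * (1 - u (s + 1)) * (1 - v (s + 1))
        = (u s * v s - u (s + 1) * v (s + 1)) + (u (s + 1) + v (s + 1)) - 2 * a s :=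
    fun s _ => alg1 (a s) (u s) (v s) (u (s + 1)) (v (s + 1)) (hmemu s) (hmemv s)
      (hmemu (s + 1)) (hmemv (s + 1)) (hmema s) (hau s) (hav s) (hua s) (hva s)
  have htel : ∑ s ∈ Finset.range D, (u s * v s - u (s + 1) * v (s + 1))
      = u 0 * v 0 - u D * v D := Finset.sum_range_sub' (fun s => u s * v s) D
  have hshift : ∑ s ∈ Finset.range (D + 1), (u s + v s)
      = (∑ s ∈ Finset.range D, (u (s + 1) + v (s + 1))) + (u 0 + v 0) :=
    Finset.sum_range_succ' (fun s => u s + v s) D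
  have hu0v0 : u 0 = 1 ∨ v 0 = 1 := by
    rcases le_or_gt k 0 with h | h
    · left; rw [hu]; exact Xf_of_neg (by push_cast; omega)
    · right; rw [hv]; exact Xf_of_neg (by push_cast; omega)
  have huDvD : u D = 0 ∨ v D = 0 := by
    rcases le_or_gt ((m : ℤ)) ((n : ℤ) + k) with h | h
    · right; rw [hv]; exact Xf_of_big (by omega) (by omega) (by left; omega)
    · left; rw [hu]; exact Xf_of_big (by omega) (by omega) (by right; omega)
  have key : u 0 + v 0 - 1 = u 0 * v 0 - u D * v D :=
    alg2 _ _ _ _ hu0v0 huDvD (hmemu 0) (hmemv 0) (hmemu D) (hmemv D)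
  -- assemble
  rw [hS1, hsplit, hS3]
  have hU' : (∑ p ∈ Finset.univ.filter
      (fun p : Fin m × Fin n => (p.1 : ℤ) - (p.2 : ℤ) = k - 1), ind I p)
      = (∑ s ∈ Finset.range (D + 1), u s) - (if k ≤ 0 then (1 : ℝ) else 0) := by
    rw [hU]; ring
  have hV' : (∑ p ∈ Finset.univ.filter
      (fun p : Fin m × Fin n => (p.1 : ℤ) - (p.2 : ℤ) = k + 1), ind I p)
      = (∑ s ∈ Finset.range (D + 1), v s) - (if 0 ≤ k then (1 : ℝ) else 0) := by
    rw [hV]; ring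
  rw [hU', hV', Finset.sum_congr rfl hterm]
  have hsum1 : ∑ s ∈ Finset.range D,
      ((u s * v s - u (s + 1) * v (s + 1)) + (u (s + 1) + v (s + 1)) - 2 * a s)
      = (∑ s ∈ Finset.range D, (u s * v s - u (s + 1) * v (s + 1)))
        + (∑ s ∈ Finset.range D, (u (s + 1) + v (s + 1)))
        - 2 * ∑ s ∈ Finset.range D, a s := by
    rw [Finset.sum_sub_distrib, Finset.sum_add_distrib, Finset.mul_sum]
  rw [hsum1, htel]
  have hsum2 : ∑ s ∈ Finset.range D, (u (s + 1) + v (s + 1))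
      = (∑ s ∈ Finset.range (D + 1), u s) + (∑ s ∈ Finset.range (D + 1), v s)
        - (u 0 + v 0) := by
    rw [← Finset.sum_add_distrib] at *
    rw [hshift]; ring
  rw [hsum2]
  have hite : (if k ≤ 0 then (1 : ℝ) else 0) + (if 0 ≤ k then (1 : ℝ) else 0)
      = 1 + (if k = 0 then (1 : ℝ) else 0) := by
    rcases lt_trichotomy k 0 with h | h | h
    · rw [if_pos h.le, if_neg (by omega), if_neg (by omega)]
    · rw [if_pos (le_of_eq h), if_pos (ge_of_eq h), if_pos h]
    · rw [if_neg (by omega), if_pos h.le, if_neg (by omega)]; ring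
  have hite2 : (if k = 0 then (-1 : ℝ) else 0) = -(if k = 0 then (1 : ℝ) else 0) := by
    split_ifs <;> ring
  rw [hite2]
  nlinarith [key, hite]
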